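/- Let W be a standard one-dimensional Brownian motion and Δt > 0. Define I_{(0,1,0)} := ∫₀^{Δt} ( t·W_t − ∫₀^t W_s ds ) dt. Then E[ I_{(0,1,0)}² ] = Δt⁵/30. -/

import Mathlib

open MeasureTheory ProbabilityTheory
open Real Filter Set
open scoped NNReal ENNReal

/-- A standard one-dimensional Brownian motion on a probability space `(Ω, P)`:
almost surely continuous sample paths, `W 0 = 0`, independent increments, and
Gaussian increments `W t - W s ~ N(0, t - s)` for `0 ≤ s ≤ t`. -/
structure IsBrownianMotion {Ω : Type*} [MeasurableSpace Ω] (P : Measure Ω)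
    (W : ℝ → Ω → ℝ) : Prop where
  measurable : ∀ t, Measurable (W t)
  cont : ∀ᵐ ω ∂P, Continuous fun t => W t ω
  init : ∀ᵐ ω ∂P, W 0 ω = 0
  gaussian_incr : ∀ s t : ℝ, 0 ≤ s → s ≤ t →
    P.map (fun ω => W t ω - W s ω) = gaussianReal 0 (Real.toNNReal (t - s))
  indep_incr : ∀ (n : ℕ) (ts : Fin (n + 1) → ℝ), Monotone ts → (∀ i, 0 ≤ ts i) →
    iIndepFun
      (fun i : Fin n => fun ω => W (ts i.succ) ω - W (ts i.castSucc) ω) P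


section BMaux

set_option linter.unusedSectionVars false

lemma BM_integrable_id_gauss (b : ℝ) (hb : 0 < b) :
    Integrable (fun x : ℝ => x * Real.exp (-b * x ^ 2)) := integrable_mul_exp_neg_mul_sq hb

lemma BM_integrable_sq_gauss (b : ℝ) (hb : 0 < b) :
    Integrable (fun x : ℝ => x ^ 2 * Real.exp (-b * x ^ 2)) := by
  have h := integrable_rpow_mul_exp_neg_mul_sq hb (by norm_num : (-1:ℝ) < 2)
  convert h using 2 with x
  rw [← Real.rpow_natCast x 2]
  norm_num

lemma BM_integral_sq_gauss (b : ℝ) (hb : 0 < b) :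
    ∫ x : ℝ, x ^ 2 * Real.exp (-b * x ^ 2) = Real.sqrt π / (2 * b * Real.sqrt b) := by
  have h0 : (fun x : ℝ => x ^ 2 * Real.exp (-b * x ^ 2))
      = fun x : ℝ => |x| ^ 2 * Real.exp (-b * |x| ^ 2) := by
    ext x; rw [sq_abs]
  rw [h0, integral_comp_abs (f := fun x : ℝ => x ^ 2 * Real.exp (-b * x ^ 2))]
  have h1 : ∫ x in Ioi (0:ℝ), x ^ 2 * Real.exp (-b * x ^ 2)
      = ∫ x in Ioi (0:ℝ), x ^ (2:ℝ) * Real.exp (-b * x ^ (2:ℝ)) := by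
    refine setIntegral_congr_fun measurableSet_Ioi (fun x hx => ?_)
    rw [← Real.rpow_natCast x 2]; norm_num
  rw [h1, integral_rpow_mul_exp_neg_mul_rpow (by norm_num) (by norm_num) hb]
  have h2 : ((2:ℝ) + 1) / 2 = 3 / 2 := by norm_num
  rw [h2]
  have h3 : Real.Gamma (3/2) = Real.sqrt π / 2 := by
    have : (3/2 : ℝ) = 1/2 + 1 := by norm_num
    rw [this, Real.Gamma_add_one (by norm_num), Real.Gamma_one_half_eq]
    ring
  rw [h3]
  have h4 : b ^ (-(3/2) : ℝ) = (b * Real.sqrt b)⁻¹ := by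
    rw [show (-(3/2) : ℝ) = -1 + -(1/2) by norm_num, Real.rpow_add hb, Real.rpow_neg_one,
      Real.rpow_neg hb.le, ← Real.sqrt_eq_rpow, mul_inv]
  rw [show (-((2:ℝ)+1)/2) = (-(3/2) : ℝ) by norm_num, h4]
  have hsb : Real.sqrt b ≠ 0 := by positivity
  field_simp

lemma BM_pdf_toNNReal (v : ℝ≥0) (hv : v ≠ 0) :
    gaussianReal 0 v = volume.withDensity fun x => ((gaussianPDFReal 0 v x).toNNReal : ℝ≥0∞) := by
  rw [gaussianReal_of_var_ne_zero 0 hv]; rfl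

lemma BM_integral_gaussianReal (v : ℝ≥0) (hv : v ≠ 0) (g : ℝ → ℝ) :
    ∫ x, g x ∂(gaussianReal 0 v) = ∫ x, gaussianPDFReal 0 v x * g x := by
  rw [BM_pdf_toNNReal v hv,
    integral_withDensity_eq_integral_smul ((measurable_gaussianPDFReal 0 v).real_toNNReal) g]
  congr 1 with x
  simp [NNReal.smul_def, Real.coe_toNNReal _ (gaussianPDFReal_nonneg 0 v x)]

lemma BM_integrable_gaussianReal (v : ℝ≥0) (hv : v ≠ 0) (g : ℝ → ℝ)
    (h : Integrable (fun x => gaussianPDFReal 0 v x * g x)) :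
    Integrable g (gaussianReal 0 v) := by
  rw [BM_pdf_toNNReal v hv,
    integrable_withDensity_iff_integrable_smul ((measurable_gaussianPDFReal 0 v).real_toNNReal)]
  convert h using 2 with x
  · rfl
  simp [NNReal.smul_def, Real.coe_toNNReal _ (gaussianPDFReal_nonneg 0 v x)]

lemma BM_pdfReal_eq (v : ℝ≥0) (x : ℝ) :
    gaussianPDFReal 0 v x = (Real.sqrt (2 * π * v))⁻¹ * Real.exp (-(2 * v : ℝ)⁻¹ * x ^ 2) := by
  rw [gaussianPDFReal]
  congr 1
  rw [sub_zero]
  congr 1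
  rw [neg_div, neg_mul]
  congr 1
  rw [inv_mul_eq_div]

lemma BM_gauss_mean (v : ℝ≥0) : ∫ x, x ∂(gaussianReal 0 v) = 0 := by
  by_cases hv : v = 0
  · simp [hv]
  rw [BM_integral_gaussianReal v hv]
  have hodd : ∀ x : ℝ, gaussianPDFReal 0 v (-x) * (-x) = -(gaussianPDFReal 0 v x * x) := by
    intro x
    rw [BM_pdfReal_eq, BM_pdfReal_eq, neg_pow]
    norm_num
  have := integral_neg_eq_self (fun x : ℝ => gaussianPDFReal 0 v x * x) volume
  have h2 : ∫ x : ℝ, gaussianPDFReal 0 v x * x = - ∫ x : ℝ, gaussianPDFReal 0 v x * x := by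
    conv_lhs => rw [← this]
    rw [← integral_neg]
    congr 1 with x
    exact hodd x
  linarith [h2]

lemma BM_gauss_integrable_id (v : ℝ≥0) : Integrable (fun x : ℝ => x) (gaussianReal 0 v) := by
  by_cases hv : v = 0
  · rw [hv, gaussianReal_zero_var]
    exact (integrable_congr (ae_eq_dirac _)).mpr (integrable_const _)
  refine BM_integrable_gaussianReal v hv _ ?_
  have hb : 0 < (2 * v : ℝ)⁻¹ := by
    have : (0:ℝ) < v := by positivity
    positivity
  have := (BM_integrable_id_gauss _ hb).const_mul (Real.sqrt (2 * π * v))⁻¹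
  convert this using 2 with x
  rw [BM_pdfReal_eq]; ring

lemma BM_gauss_integrable_sq (v : ℝ≥0) : Integrable (fun x : ℝ => x ^ 2) (gaussianReal 0 v) := by
  by_cases hv : v = 0
  · rw [hv, gaussianReal_zero_var]
    exact (integrable_congr (ae_eq_dirac _)).mpr (integrable_const _)
  refine BM_integrable_gaussianReal v hv _ ?_
  have hb : 0 < (2 * v : ℝ)⁻¹ := by
    have : (0:ℝ) < v := by positivity
    positivity
  have := (BM_integrable_sq_gauss _ hb).const_mul (Real.sqrt (2 * π * v))⁻¹
  convert this using 2 with x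
  rw [BM_pdfReal_eq]; ring

lemma BM_gauss_var (v : ℝ≥0) : ∫ x, x ^ 2 ∂(gaussianReal 0 v) = v := by
  by_cases hv : v = 0
  · simp [hv]
  rw [BM_integral_gaussianReal v hv]
  have hv' : (0:ℝ) < v := by positivity
  have hb : 0 < (2 * v : ℝ)⁻¹ := by positivity
  have h1 : ∫ x : ℝ, gaussianPDFReal 0 v x * x ^ 2
      = (Real.sqrt (2 * π * v))⁻¹ * ∫ x : ℝ, x ^ 2 * Real.exp (-(2 * v : ℝ)⁻¹ * x ^ 2) := by
    rw [← integral_const_mul]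
    congr 1 with x
    rw [BM_pdfReal_eq]; ring
  rw [h1, BM_integral_sq_gauss _ hb]
  have h2 : Real.sqrt ((2 * v : ℝ)⁻¹) = (Real.sqrt (2 * v))⁻¹ := by
    rw [Real.sqrt_inv]
  rw [h2]
  have h3 : Real.sqrt (2 * π * v) = Real.sqrt π * Real.sqrt (2 * v) := by
    rw [← Real.sqrt_mul (by positivity)]
    congr 1; ring
  rw [h3]
  have h4 : Real.sqrt (2 * v) ≠ 0 := by positivity
  have h5 : Real.sqrt π ≠ 0 := by
    have := Real.pi_pos; positivity
  have h6 : Real.sqrt (2 * v) * Real.sqrt (2 * v) = 2 * v := Real.mul_self_sqrt (by positivity)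
  field_simp


variable {Ω : Type*} [MeasurableSpace Ω] {P : Measure Ω} [IsProbabilityMeasure P]
  {W : ℝ → Ω → ℝ}

lemma BM_law (hW : IsBrownianMotion P W) {t : ℝ} (ht : 0 ≤ t) :
    P.map (W t) = gaussianReal 0 t.toNNReal := by
  have h := hW.gaussian_incr 0 t le_rfl ht
  rw [sub_zero] at h
  rw [← h]
  apply Measure.map_congr
  filter_upwards [hW.init] with ω h0
  rw [h0, sub_zero]

lemma BM_integrable (hW : IsBrownianMotion P W) {t : ℝ} (ht : 0 ≤ t) :
    Integrable (W t) P := by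
  have h : Integrable (fun x : ℝ => x) (P.map (W t)) := by
    rw [BM_law hW ht]; exact BM_gauss_integrable_id _
  exact (integrable_map_measure measurable_id.aestronglyMeasurable (hW.measurable t).aemeasurable).mp h

lemma BM_mean (hW : IsBrownianMotion P W) {t : ℝ} (ht : 0 ≤ t) :
    ∫ ω, W t ω ∂P = 0 := by
  have h : ∫ x, x ∂(P.map (W t)) = 0 := by rw [BM_law hW ht]; exact BM_gauss_mean _
  calc ∫ ω, W t ω ∂P = ∫ x, x ∂(P.map (W t)) :=
        (integral_map (hW.measurable t).aemeasurable measurable_id.aestronglyMeasurable).symm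
    _ = 0 := h

lemma BM_integrable_sq (hW : IsBrownianMotion P W) {t : ℝ} (ht : 0 ≤ t) :
    Integrable (fun ω => W t ω ^ 2) P := by
  have h : Integrable (fun x : ℝ => x ^ 2) (P.map (W t)) := by
    rw [BM_law hW ht]; exact BM_gauss_integrable_sq _
  rwa [integrable_map_measure (by fun_prop) (hW.measurable t).aemeasurable] at h

lemma BM_sq_mean (hW : IsBrownianMotion P W) {t : ℝ} (ht : 0 ≤ t) :
    ∫ ω, W t ω ^ 2 ∂P = t := by
  have h : ∫ x, x ^ 2 ∂(P.map (W t)) = t.toNNReal := by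
    rw [BM_law hW ht]; exact BM_gauss_var _
  rw [integral_map (hW.measurable t).aemeasurable (by fun_prop)] at h
  rw [h, Real.coe_toNNReal _ ht]

lemma BM_indep (hW : IsBrownianMotion P W) {s t : ℝ} (hs : 0 ≤ s) (hst : s ≤ t) :
    IndepFun (W s) (fun ω => W t ω - W s ω) P := by
  have hts : Monotone ![0, s, t] := by
    rw [Fin.monotone_iff_le_succ]
    intro i
    fin_cases i <;> simp [hs, hst]
  have hpos : ∀ i, 0 ≤ (![0, s, t] : Fin 3 → ℝ) i := by
    intro i; fin_cases i <;> simp [hs, le_trans hs hst]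
  have h := hW.indep_incr 2 ![0, s, t] hts hpos
  have h01 := h.indepFun (i := 0) (j := 1) (by norm_num)
  have e0 : (fun ω => W (![0, s, t] (Fin.succ 0)) ω - W (![0, s, t] (Fin.castSucc 0)) ω)
      =ᵐ[P] W s := by
    filter_upwards [hW.init] with ω h0
    simp [h0]
  have e1 : (fun ω => W (![0, s, t] (Fin.succ 1)) ω - W (![0, s, t] (Fin.castSucc 1)) ω)
      =ᵐ[P] fun ω => W t ω - W s ω := by
    filter_upwards with ω
    simp
  exact h01.congr e0 e1

lemma BM_cov_integrable (hW : IsBrownianMotion P W) {s t : ℝ} (hs : 0 ≤ s) (hst : s ≤ t) :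
    Integrable (fun ω => W s ω * W t ω) P := by
  have hY : Integrable (fun ω => W t ω - W s ω) P :=
    (BM_integrable hW (hs.trans hst)).sub (BM_integrable hW hs)
  have h1 : Integrable (fun ω => W s ω * (W t ω - W s ω)) P := by
    have := (BM_indep hW hs hst).integrable_mul (BM_integrable hW hs) hY
    exact this
  have h2 : Integrable (fun ω => W s ω ^ 2) P := BM_integrable_sq hW hs
  have : (fun ω => W s ω * W t ω) = fun ω => W s ω ^ 2 + W s ω * (W t ω - W s ω) := by
    ext ω; ring
  rw [this]
  exact h2.add h1

lemma BM_cov (hW : IsBrownianMotion P W) {s t : ℝ} (hs : 0 ≤ s) (hst : s ≤ t) :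
    ∫ ω, W s ω * W t ω ∂P = s := by
  have hY : Integrable (fun ω => W t ω - W s ω) P :=
    (BM_integrable hW (hs.trans hst)).sub (BM_integrable hW hs)
  have hYmean : ∫ ω, (W t ω - W s ω) ∂P = 0 := by
    rw [integral_sub (BM_integrable hW (hs.trans hst)) (BM_integrable hW hs),
      BM_mean hW (hs.trans hst), BM_mean hW hs, sub_zero]
  have h1 : ∫ ω, W s ω * (W t ω - W s ω) ∂P = 0 := by
    have h1' := (BM_indep hW hs hst).integral_mul_eq_mul_integral (BM_integrable hW hs).1 hY.1
    rw [show (W s * fun ω => W t ω - W s ω) = fun ω => W s ω * (W t ω - W s ω) from rfl] at h1'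
    rw [h1', hYmean, mul_zero]
  have h2 : (fun ω => W s ω * W t ω) = fun ω => W s ω ^ 2 + W s ω * (W t ω - W s ω) := by
    ext ω; ring
  have h1int : Integrable (fun ω => W s ω * (W t ω - W s ω)) P :=
    (BM_indep hW hs hst).integrable_mul (BM_integrable hW hs) hY
  rw [h2, integral_add (BM_integrable_sq hW hs) h1int, BM_sq_mean hW hs, h1, add_zero]

lemma BM_cov_min (hW : IsBrownianMotion P W) {s t : ℝ} (hs : 0 ≤ s) (ht : 0 ≤ t) :
    ∫ ω, W s ω * W t ω ∂P = min s t := by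
  rcases le_total s t with h | h
  · rw [min_eq_left h]; exact BM_cov hW hs h
  · rw [min_eq_right h, show (fun ω => W s ω * W t ω) = fun ω => W t ω * W s ω by ext ω; ring]
    exact BM_cov hW ht h

lemma BM_tendsto_ceil (t : ℝ) :
    Tendsto (fun n : ℕ => ((⌈t * (n + 1)⌉ : ℝ) / (n + 1))) atTop (nhds t) := by
  have hle : ∀ n : ℕ, t ≤ (⌈t * (n + 1)⌉ : ℝ) / (n + 1) := by
    intro n
    rw [le_div_iff₀ (by positivity)]
    exact Int.le_ceil _
  have hlt : ∀ n : ℕ, (⌈t * (n + 1)⌉ : ℝ) / (n + 1) ≤ t + 1 / (n + 1) := by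
    intro n
    rw [div_le_iff₀ (by positivity)]
    have := (Int.ceil_lt_add_one (t * (n + 1))).le
    calc (⌈t * (n + 1)⌉ : ℝ) ≤ t * (n + 1) + 1 := this
      _ = (t + 1 / (n + 1)) * (n + 1) := by field_simp
  have h2 : Tendsto (fun n : ℕ => t + 1 / (n + 1 : ℝ)) atTop (nhds t) := by
    have := tendsto_one_div_add_atTop_nhds_zero_nat (𝕜 := ℝ)
    simpa using tendsto_const_nhds.add this
  exact tendsto_of_tendsto_of_tendsto_of_le_of_le tendsto_const_nhds h2 hle hlt

lemma BM_modification (hW : IsBrownianMotion P W) :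
    ∃ V : ℝ → Ω → ℝ, Measurable (fun p : ℝ × Ω => V p.1 p.2) ∧
      (∀ᵐ ω ∂P, ∀ t, V t ω = W t ω) := by
  classical
  set q : ℕ → ℝ → ℝ := fun n t => (⌈t * (n + 1)⌉ : ℝ) / (n + 1) with hq
  refine ⟨fun t ω => limsup (fun n => W (q n t) ω) atTop, ?_, ?_⟩
  · apply Measurable.limsup
    intro n
    have hmain : Measurable (fun p : Ω × ℤ => W ((p.2 : ℝ) / (n + 1)) p.1) :=
      measurable_from_prod_countable_left (fun k => by simpa using hW.measurable ((k : ℝ) / (n + 1)))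
    have hc : Measurable (fun p : ℝ × Ω => (p.2, ⌈p.1 * (n + 1)⌉)) :=
      measurable_snd.prodMk ((measurable_fst.mul_const _).ceil)
    exact hmain.comp hc
  · filter_upwards [hW.cont] with ω hcont t
    have : Tendsto (fun n => W (q n t) ω) atTop (nhds (W t ω)) :=
      (hcont.tendsto t).comp (BM_tendsto_ceil t)
    exact this.limsup_eq

lemma BM_ibp (Δt : ℝ) (w : ℝ → ℝ) (hw : Continuous w) :
    ∫ t in (0:ℝ)..Δt, (t * w t - ∫ s in (0:ℝ)..t, w s)
      = ∫ t in (0:ℝ)..Δt, (2 * t - Δt) * w t := by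
  set F : ℝ → ℝ := fun x => ∫ s in (0:ℝ)..x, w s with hF
  have hFd : ∀ x : ℝ, HasDerivAt F (w x) x := fun x =>
    (hw.integral_hasStrictDerivAt 0 x).hasDerivAt
  have hFc : Continuous F := by
    rw [continuous_iff_continuousAt]
    exact fun x => (hFd x).continuousAt
  have h1 : ∫ t in (0:ℝ)..Δt, F t * (1:ℝ)
      = F Δt * Δt - F 0 * 0 - ∫ t in (0:ℝ)..Δt, w t * t := by
    apply intervalIntegral.integral_mul_deriv_eq_deriv_mul
      (fun x _ => hFd x) (fun x _ => hasDerivAt_id x)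
      (hw.intervalIntegrable _ _) intervalIntegrable_const
  have hF0 : F 0 = 0 := intervalIntegral.integral_same
  simp only [mul_one, hF0, zero_mul, mul_zero, sub_zero] at h1
  have hint1 : IntervalIntegrable (fun t => t * w t) MeasureTheory.volume 0 Δt :=
    (continuous_id.mul hw).intervalIntegrable _ _
  have hint2 : IntervalIntegrable F MeasureTheory.volume 0 Δt := hFc.intervalIntegrable _ _
  rw [intervalIntegral.integral_sub hint1 hint2]
  have h2 : ∫ t in (0:ℝ)..Δt, (2 * t - Δt) * w t
      = 2 * (∫ t in (0:ℝ)..Δt, t * w t) - Δt * ∫ t in (0:ℝ)..Δt, w t := by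
    rw [← intervalIntegral.integral_const_mul, ← intervalIntegral.integral_const_mul,
      ← intervalIntegral.integral_sub ((hint1.const_mul 2)) ((hw.intervalIntegrable _ _).const_mul Δt)]
    congr 1 with t
    ring
  rw [h2]
  have h3 : ∫ t in (0:ℝ)..Δt, w t * t = ∫ t in (0:ℝ)..Δt, t * w t := by
    congr 1 with t; ring
  rw [h3] at h1
  have hFΔ : F Δt = ∫ t in (0:ℝ)..Δt, w t := rfl
  rw [h1, hFΔ]
  ring

lemma BM_integral_quartic (a b c4 c3 c2 c1 c0 : ℝ) :
    ∫ x in a..b, (c4 * x ^ 4 + c3 * x ^ 3 + c2 * x ^ 2 + c1 * x + c0)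
      = (c4 * b ^ 5 / 5 + c3 * b ^ 4 / 4 + c2 * b ^ 3 / 3 + c1 * b ^ 2 / 2 + c0 * b)
        - (c4 * a ^ 5 / 5 + c3 * a ^ 4 / 4 + c2 * a ^ 3 / 3 + c1 * a ^ 2 / 2 + c0 * a) := by
  apply intervalIntegral.integral_eq_sub_of_hasDerivAt
    (f := fun x : ℝ => c4 * x ^ 5 / 5 + c3 * x ^ 4 / 4 + c2 * x ^ 3 / 3 + c1 * x ^ 2 / 2 + c0 * x)
  · intro x _
    have h : HasDerivAt
        (fun x : ℝ => c4 * x ^ 5 / 5 + c3 * x ^ 4 / 4 + c2 * x ^ 3 / 3 + c1 * x ^ 2 / 2 + c0 * x)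
        (c4 * (5 * x ^ 4) / 5 + c3 * (4 * x ^ 3) / 4 + c2 * (3 * x ^ 2) / 3
          + c1 * (2 * x ^ 1) / 2 + c0 * 1) x := by
      exact ((((((hasDerivAt_pow 5 x).const_mul c4).div_const 5).add
        (((hasDerivAt_pow 4 x).const_mul c3).div_const 4)).add
        (((hasDerivAt_pow 3 x).const_mul c2).div_const 3)).add
        (((hasDerivAt_pow 2 x).const_mul c1).div_const 2)).add
        ((hasDerivAt_id x).const_mul c0)
    exact h.congr_deriv (by ring)
  · apply Continuous.intervalIntegrable
    fun_prop

lemma BM_final_calc (Δt : ℝ) (hΔt : 0 < Δt) :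
    ∫ t in (0:ℝ)..Δt, (∫ s in (0:ℝ)..Δt, (2 * t - Δt) * ((2 * s - Δt) * min t s))
      = Δt ^ 5 / 30 := by
  have hinner : ∀ t ∈ Set.Icc (0:ℝ) Δt,
      (∫ s in (0:ℝ)..Δt, (2 * t - Δt) * ((2 * s - Δt) * min t s))
        = -(2/3) * t ^ 4 + (4/3) * Δt * t ^ 3 + (-(Δt ^ 2 / 2)) * t ^ 2 + 0 * t + 0 := by
    intro t ht
    obtain ⟨ht0, htΔ⟩ := ht
    have hsplit : (∫ s in (0:ℝ)..t, (2 * t - Δt) * ((2 * s - Δt) * min t s))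
        + (∫ s in t..Δt, (2 * t - Δt) * ((2 * s - Δt) * min t s))
        = ∫ s in (0:ℝ)..Δt, (2 * t - Δt) * ((2 * s - Δt) * min t s) := by
      apply intervalIntegral.integral_add_adjacent_intervals <;>
      · apply Continuous.intervalIntegrable
        fun_prop
    rw [← hsplit]
    have h1 : (∫ s in (0:ℝ)..t, (2 * t - Δt) * ((2 * s - Δt) * min t s))
        = ∫ s in (0:ℝ)..t,
            ((0:ℝ) * s ^ 4 + 0 * s ^ 3 + ((2*t-Δt)*2) * s ^ 2 + ((2*t-Δt)*(-Δt)) * s + 0) := by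
      apply intervalIntegral.integral_congr
      intro s hs
      rw [Set.uIcc_of_le ht0] at hs
      show (2 * t - Δt) * ((2 * s - Δt) * min t s) = _
      rw [min_eq_right hs.2]
      ring
    have h2 : (∫ s in t..Δt, (2 * t - Δt) * ((2 * s - Δt) * min t s))
        = ∫ s in t..Δt,
            ((0:ℝ) * s ^ 4 + 0 * s ^ 3 + 0 * s ^ 2 + ((2*t-Δt)*t*2) * s + ((2*t-Δt)*t*(-Δt))) := by
      apply intervalIntegral.integral_congr
      intro s hs
      rw [Set.uIcc_of_le htΔ] at hs
      show (2 * t - Δt) * ((2 * s - Δt) * min t s) = _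
      rw [min_eq_left hs.1]
      ring
    rw [h1, h2, BM_integral_quartic, BM_integral_quartic]
    ring
  have heq : ∫ t in (0:ℝ)..Δt, (∫ s in (0:ℝ)..Δt, (2 * t - Δt) * ((2 * s - Δt) * min t s))
      = ∫ t in (0:ℝ)..Δt,
          (-(2/3) * t ^ 4 + (4/3) * Δt * t ^ 3 + (-(Δt ^ 2 / 2)) * t ^ 2 + 0 * t + 0) := by
    apply intervalIntegral.integral_congr
    intro t ht
    rw [Set.uIcc_of_le hΔt.le] at ht
    exact hinner t ht
  rw [heq, BM_integral_quartic]
  ring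


end BMaux

/-- `E[ I_{(0,1,0)}² ] = Δt⁵/30`. -/
theorem expectation_I010_sq {Ω : Type*} [MeasurableSpace Ω] (P : Measure Ω)
    [IsProbabilityMeasure P] (W : ℝ → Ω → ℝ) (hW : IsBrownianMotion P W)
    (Δt : ℝ) (hΔt : 0 < Δt) :
    ∫ ω, (∫ t in (0:ℝ)..Δt, (t * W t ω - ∫ s in (0:ℝ)..t, W s ω)) ^ 2 ∂P = Δt ^ 5 / 30 := by
  obtain ⟨V, hVmeas, hVeq⟩ := BM_modification hW
  have hVae : ∀ t : ℝ, (fun ω => V t ω) =ᵐ[P] W t := fun t => by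
    filter_upwards [hVeq] with ω h using h t
  have hVsq_int : ∀ t : ℝ, 0 ≤ t → Integrable (fun ω => V t ω ^ 2) P := fun t ht =>
    (BM_integrable_sq hW ht).congr (by filter_upwards [hVae t] with ω h; rw [h])
  have hVsq : ∀ t : ℝ, 0 ≤ t → ∫ ω, V t ω ^ 2 ∂P = t := fun t ht => by
    rw [integral_congr_ae (g := fun ω => W t ω ^ 2)
      (by filter_upwards [hVae t] with ω h; rw [h])]
    exact BM_sq_mean hW ht
  have hVcov : ∀ s t : ℝ, 0 ≤ s → 0 ≤ t → ∫ ω, V s ω * V t ω ∂P = min s t := fun s t hs ht => by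
    rw [integral_congr_ae (g := fun ω => W s ω * W t ω)
      (by filter_upwards [hVae s, hVae t] with ω h1 h2; rw [h1, h2])]
    exact BM_cov_min hW hs ht
  set A : Set ℝ := Set.Ioc 0 Δt with hA
  set μ : Measure ℝ := MeasureTheory.volume.restrict A with hμ
  haveI hμfin : IsFiniteMeasure μ := by
    constructor
    rw [hμ, Measure.restrict_apply_univ, hA, Real.volume_Ioc]
    exact ENNReal.ofReal_lt_top
  set Φ : Ω × (ℝ × ℝ) → ℝ :=
    fun p => ((2 * p.2.1 - Δt) * V p.2.1 p.1) * ((2 * p.2.2 - Δt) * V p.2.2 p.1) with hΦ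
  have hΦmeas : Measurable Φ := by
    have h1 : Measurable fun p : Ω × (ℝ × ℝ) => V p.2.1 p.1 :=
      hVmeas.comp (measurable_snd.fst.prodMk measurable_fst)
    have h2 : Measurable fun p : Ω × (ℝ × ℝ) => V p.2.2 p.1 :=
      hVmeas.comp (measurable_snd.snd.prodMk measurable_fst)
    have h3 : Measurable fun p : Ω × (ℝ × ℝ) => 2 * p.2.1 - Δt :=
      (measurable_snd.fst.const_mul 2).sub measurable_const
    have h4 : Measurable fun p : Ω × (ℝ × ℝ) => 2 * p.2.2 - Δt :=
      (measurable_snd.snd.const_mul 2).sub measurable_const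
    exact (h3.mul h1).mul (h4.mul h2)
  have hzae : ∀ᵐ z ∂(μ.prod μ), z ∈ A ×ˢ A := by
    rw [hμ, Measure.prod_restrict]
    exact ae_restrict_mem (measurableSet_Ioc.prod measurableSet_Ioc)
  -- integrability of Φ on the product space
  have hΦint : Integrable Φ (P.prod (μ.prod μ)) := by
    refine ⟨hΦmeas.aestronglyMeasurable, ?_⟩
    show ∫⁻ p, ‖Φ p‖₊ ∂(P.prod (μ.prod μ)) < ⊤
    have hstep : ∀ᵐ z ∂(μ.prod μ),
        (∫⁻ ω, ‖Φ (ω, z)‖₊ ∂P) ≤ ENNReal.ofReal (Δt ^ 2 * Δt) := by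
      filter_upwards [hzae] with z hzA
      obtain ⟨hz1, hz2⟩ := hzA
      have hg1 : |2 * z.1 - Δt| ≤ Δt := abs_le.2 ⟨by linarith [hz1.1], by linarith [hz1.2]⟩
      have hg2 : |2 * z.2 - Δt| ≤ Δt := abs_le.2 ⟨by linarith [hz2.1], by linarith [hz2.2]⟩
      have habs : ∀ ω, |Φ (ω, z)| ≤ Δt ^ 2 * ((V z.1 ω ^ 2 + V z.2 ω ^ 2) / 2) := by
        intro ω
        have e : |Φ (ω, z)| = (|2 * z.1 - Δt| * |2 * z.2 - Δt|) * (|V z.1 ω| * |V z.2 ω|) := by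
          rw [hΦ]
          simp only [abs_mul]
          ring
        rw [e]
        have h5 : |V z.1 ω| * |V z.2 ω| ≤ (V z.1 ω ^ 2 + V z.2 ω ^ 2) / 2 := by
          nlinarith [sq_nonneg (|V z.1 ω| - |V z.2 ω|), sq_abs (V z.1 ω), sq_abs (V z.2 ω)]
        have h6 : |2 * z.1 - Δt| * |2 * z.2 - Δt| ≤ Δt ^ 2 := by
          nlinarith [abs_nonneg (2 * z.1 - Δt), abs_nonneg (2 * z.2 - Δt)]
        have h7 : (0:ℝ) ≤ |V z.1 ω| * |V z.2 ω| := by positivity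
        nlinarith [mul_le_mul h6 h5 h7 (by positivity : (0:ℝ) ≤ Δt ^ 2)]
      calc ∫⁻ ω, ‖Φ (ω, z)‖₊ ∂P
          ≤ ∫⁻ ω, ENNReal.ofReal (Δt ^ 2 * ((V z.1 ω ^ 2 + V z.2 ω ^ 2) / 2)) ∂P := by
            refine lintegral_mono fun ω => ?_
            rw [← enorm_eq_nnnorm, Real.enorm_eq_ofReal_abs]
            exact ENNReal.ofReal_le_ofReal (habs ω)
        _ = ENNReal.ofReal (∫ ω, Δt ^ 2 * ((V z.1 ω ^ 2 + V z.2 ω ^ 2) / 2) ∂P) := by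
            refine (ofReal_integral_eq_lintegral_ofReal ?_ (ae_of_all _ fun ω => by positivity)).symm
            exact (((hVsq_int _ hz1.1.le).add (hVsq_int _ hz2.1.le)).div_const 2).const_mul _
        _ ≤ ENNReal.ofReal (Δt ^ 2 * Δt) := by
            refine ENNReal.ofReal_le_ofReal ?_
            rw [integral_const_mul]
            have : ∫ ω, (V z.1 ω ^ 2 + V z.2 ω ^ 2) / 2 ∂P = (z.1 + z.2) / 2 := by
              rw [integral_div, integral_add (hVsq_int _ hz1.1.le) (hVsq_int _ hz2.1.le),
                hVsq _ hz1.1.le, hVsq _ hz2.1.le]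
            rw [this]
            have h8 : (0:ℝ) ≤ Δt ^ 2 := by positivity
            nlinarith [hz1.2, hz2.2, hz1.1, hz2.1]
    calc ∫⁻ p, ‖Φ p‖₊ ∂(P.prod (μ.prod μ))
        = ∫⁻ z, ∫⁻ ω, ‖Φ (ω, z)‖₊ ∂P ∂(μ.prod μ) :=
          lintegral_prod_symm _ hΦmeas.enorm.aemeasurable
      _ ≤ ∫⁻ _z, ENNReal.ofReal (Δt ^ 2 * Δt) ∂(μ.prod μ) := lintegral_mono_ae hstep
      _ < ⊤ := by
          rw [lintegral_const]
          exact ENNReal.mul_lt_top ENNReal.ofReal_lt_top (measure_lt_top _ _)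
  -- pathwise rewriting
  have hae : ∀ᵐ ω ∂P, (∫ t in (0:ℝ)..Δt, (t * W t ω - ∫ s in (0:ℝ)..t, W s ω)) ^ 2
      = ∫ z, Φ (ω, z) ∂(μ.prod μ) := by
    filter_upwards [hW.cont, hVeq, hΦint.prod_right_ae] with ω hc hv hint
    have h1 : (∫ t in (0:ℝ)..Δt, (t * W t ω - ∫ s in (0:ℝ)..t, W s ω))
        = ∫ t in (0:ℝ)..Δt, (2 * t - Δt) * W t ω := BM_ibp Δt (fun t => W t ω) hc
    rw [h1]
    have h2 : (∫ t in (0:ℝ)..Δt, (2 * t - Δt) * W t ω)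
        = ∫ t in (0:ℝ)..Δt, (2 * t - Δt) * V t ω := by
      apply intervalIntegral.integral_congr
      intro t _
      show (2 * t - Δt) * W t ω = (2 * t - Δt) * V t ω
      rw [hv t]
    rw [h2, sq, intervalIntegral.integral_of_le hΔt.le]
    calc (∫ t in A, (2 * t - Δt) * V t ω) * (∫ t in A, (2 * t - Δt) * V t ω)
        = ∫ t, ((2 * t - Δt) * V t ω) * (∫ s, (2 * s - Δt) * V s ω ∂μ) ∂μ :=
          (integral_mul_const _ _).symm
      _ = ∫ t, ∫ s, Φ (ω, (t, s)) ∂μ ∂μ := by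
          refine integral_congr_ae (ae_of_all _ fun t => ?_)
          exact (integral_const_mul _ _).symm
      _ = ∫ z, Φ (ω, z) ∂(μ.prod μ) := (integral_prod _ hint).symm
  -- integrability of the covariance function
  have hGc : Continuous fun z : ℝ × ℝ => (2 * z.1 - Δt) * ((2 * z.2 - Δt) * min z.1 z.2) := by
    have : Continuous fun z : ℝ × ℝ => min z.1 z.2 := continuous_fst.min continuous_snd
    fun_prop
  have hGint : Integrable (fun z : ℝ × ℝ => (2 * z.1 - Δt) * ((2 * z.2 - Δt) * min z.1 z.2))
      (μ.prod μ) := by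
    refine Integrable.mono' (integrable_const (Δt * (Δt * Δt))) hGc.aestronglyMeasurable ?_
    filter_upwards [hzae] with z hzA
    obtain ⟨hz1, hz2⟩ := hzA
    have hg1 : |2 * z.1 - Δt| ≤ Δt := abs_le.2 ⟨by linarith [hz1.1], by linarith [hz1.2]⟩
    have hg2 : |2 * z.2 - Δt| ≤ Δt := abs_le.2 ⟨by linarith [hz2.1], by linarith [hz2.2]⟩
    have hm : |min z.1 z.2| ≤ Δt := by
      rw [abs_le]
      constructor
      · have := hΔt; rcases min_choice z.1 z.2 with h | h <;> rw [h] <;> linarith [hz1.1, hz2.1]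
      · rcases min_choice z.1 z.2 with h | h <;> rw [h] <;> linarith [hz1.2, hz2.2]
    have : ‖(2 * z.1 - Δt) * ((2 * z.2 - Δt) * min z.1 z.2)‖
        = |2 * z.1 - Δt| * (|2 * z.2 - Δt| * |min z.1 z.2|) := by
      rw [Real.norm_eq_abs, abs_mul, abs_mul]
    rw [this]
    have h0 : (0:ℝ) ≤ |min z.1 z.2| := abs_nonneg _
    have h1 : (0:ℝ) ≤ |2 * z.2 - Δt| := abs_nonneg _
    have h2 : (0:ℝ) ≤ |2 * z.1 - Δt| := abs_nonneg _
    exact mul_le_mul hg1 (mul_le_mul hg2 hm h0 hΔt.le) (by positivity) hΔt.le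
  -- main chain
  calc ∫ ω, (∫ t in (0:ℝ)..Δt, (t * W t ω - ∫ s in (0:ℝ)..t, W s ω)) ^ 2 ∂P
      = ∫ ω, ∫ z, Φ (ω, z) ∂(μ.prod μ) ∂P := integral_congr_ae hae
    _ = ∫ z, ∫ ω, Φ (ω, z) ∂P ∂(μ.prod μ) := by
        have hΦint' : Integrable (Function.uncurry fun ω z => Φ (ω, z)) (P.prod (μ.prod μ)) :=
          hΦint
        exact integral_integral_swap hΦint'
    _ = ∫ z, (2 * z.1 - Δt) * ((2 * z.2 - Δt) * min z.1 z.2) ∂(μ.prod μ) := by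
        refine integral_congr_ae ?_
        filter_upwards [hzae] with z hzA
        obtain ⟨hz1, hz2⟩ := hzA
        calc ∫ ω, Φ (ω, z) ∂P
            = ∫ ω, ((2 * z.1 - Δt) * (2 * z.2 - Δt)) * (V z.1 ω * V z.2 ω) ∂P := by
              refine integral_congr_ae (ae_of_all _ fun ω => ?_)
              rw [hΦ]; ring
          _ = ((2 * z.1 - Δt) * (2 * z.2 - Δt)) * ∫ ω, V z.1 ω * V z.2 ω ∂P :=
              integral_const_mul _ _
          _ = (2 * z.1 - Δt) * ((2 * z.2 - Δt) * min z.1 z.2) := by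
              rw [hVcov _ _ hz1.1.le hz2.1.le]; ring
    _ = ∫ t, ∫ s, (2 * t - Δt) * ((2 * s - Δt) * min t s) ∂μ ∂μ := integral_prod _ hGint
    _ = ∫ t in (0:ℝ)..Δt, (∫ s in (0:ℝ)..Δt, (2 * t - Δt) * ((2 * s - Δt) * min t s)) := by
        simp only [intervalIntegral.integral_of_le hΔt.le]
        rfl
    _ = Δt ^ 5 / 30 := BM_final_calc Δt hΔt
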